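/- Let a > 0, b_1,...,b_N > 0, α > 0. Suppose m ∈ (0,1)^N with ∑ m_j = 1 satisfies (N-1)·b_k/(a + (N-1)·∑_j m_j b_j) = α(N-1)/(N·m_k) + λ for all k and some common λ ∈ ℝ. Then for any k, l: if b_k > b_l then m_k < m_l. -/

import Mathlib

/-- Consequence of the stationarity condition: the optimal negative weight m_k is
inversely ordered with the similarity b_k. -/
theorem stationarity_implies_inverse_order (N : ℕ) (hN : 2 ≤ N)
    (a : ℝ) (ha : 0 < a) (b : Fin N → ℝ) (hb : ∀ j, 0 < b j) (α : ℝ) (hα : 0 < α)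
    (m : Fin N → ℝ) (hm0 : ∀ j, 0 < m j) (hm1 : ∀ j, m j < 1) (hmsum : (∑ j, m j) = 1)
    (lam : ℝ)
    (hstat : ∀ k, ((N : ℝ) - 1) * b k / (a + ((N : ℝ) - 1) * ∑ j, m j * b j)
        = α * ((N : ℝ) - 1) / ((N : ℝ) * m k) + lam) :
    ∀ k l, b k > b l → m k < m l := by
  intro k l hkl
  have hN1 : (0 : ℝ) < (N : ℝ) - 1 := by
    have : (2 : ℝ) ≤ (N : ℝ) := by exact_mod_cast hN
    linarith
  have hNpos : (0 : ℝ) < (N : ℝ) := by linarith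
  have hS : 0 < ∑ j, m j * b j :=
    Finset.sum_pos (fun j _ => mul_pos (hm0 j) (hb j)) ⟨k, Finset.mem_univ k⟩
  have hden : 0 < a + ((N : ℝ) - 1) * ∑ j, m j * b j := by positivity
  set D := a + ((N : ℝ) - 1) * ∑ j, m j * b j with hD
  have h1 := hstat k
  have h2 := hstat l
  -- subtract
  have hsub : ((N : ℝ) - 1) * (b k - b l) / D
      = α * ((N : ℝ) - 1) / ((N : ℝ) * m k) - α * ((N : ℝ) - 1) / ((N : ℝ) * m l) := by
    field_simp at h1 h2 ⊢
    have key : ((N : ℝ) - 1) * ((N : ℝ) * (b k - b l) - D * α * (1 / m k - 1 / m l)) = 0 := by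
      linear_combination h1 - h2
    have := (mul_eq_zero.mp key).resolve_left hN1.ne'
    linarith
  have hLHS : 0 < ((N : ℝ) - 1) * (b k - b l) / D := by
    apply div_pos (mul_pos hN1 (by linarith)) hden
  rw [hsub] at hLHS
  have hmk := hm0 k
  have hml := hm0 l
  by_contra h
  push_neg at h
  have hdk : 0 < (N : ℝ) * m k := by positivity
  have hdl : 0 < (N : ℝ) * m l := by positivity
  have : α * ((N : ℝ) - 1) / ((N : ℝ) * m k) ≤ α * ((N : ℝ) - 1) / ((N : ℝ) * m l) := by
    apply div_le_div_of_nonneg_left (by positivity) hdl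
    exact mul_le_mul_of_nonneg_left h (le_of_lt hNpos)
  linarith
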